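/- For all integers m ≥ 1 and n ≥ 1: det( binomial(i+j+m, i-j+m) )_{i,j=0}^{n-1} = det(C_{n+i+j})_{i,j=0}^{m-1} / det(C_{i+j})_{i,j=0}^{m-1}, where C_k is the k-th Catalan number. -/

import Mathlib

namespace CatHankelAux

open Finset

/-- Guarded binomial coefficient `choose N j` with integer lower index. -/
def chI (N : ℕ) (j : ℤ) : ℚ := if 0 ≤ j ∧ j ≤ N then (N.choose j.toNat : ℚ) else 0

/-- Guarded binomial with integer upper index. -/
def ch2 (s : ℤ) (r : ℕ) : ℚ := if 0 ≤ s then (s.toNat.choose r : ℚ) else 0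

/-- Sign function `(-1)^k` for integer `k`. -/
def sg (k : ℤ) : ℚ := if Even k then 1 else -1

/-- Ballot numbers. -/
def bb (p : ℕ) (k : ℤ) : ℚ := chI (2*p) ((p : ℤ) - k) - chI (2*p) ((p : ℤ) - k - 1)

/-- Unsigned inverse entries `choose (k+q) (2q)`. -/
def wu (k : ℤ) (q : ℕ) : ℚ := ch2 (k + q) (2*q)

/-- Signed inverse entries. -/
def ws (k : ℤ) (q : ℕ) : ℚ := sg (k + q) * wu k q

theorem chI_neg (N : ℕ) {j : ℤ} (h : j < 0) : chI N j = 0 := by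
  rw [chI, if_neg (by omega)]

theorem chI_natCast (N a : ℕ) : chI N (a : ℤ) = if a ≤ N then (N.choose a : ℚ) else 0 := by
  rw [chI]
  by_cases h : a ≤ N
  · rw [if_pos (by constructor <;> omega), if_pos h, Int.toNat_natCast]
  · rw [if_neg (by omega), if_neg h]

theorem chI_pascal (N : ℕ) (j : ℤ) : chI (N+1) j = chI N (j-1) + chI N j := by
  rcases lt_or_ge j 0 with h0 | h0
  · rw [chI_neg _ h0, chI_neg _ (by omega), chI_neg _ (by omega)]; ring
  · obtain ⟨a, rfl⟩ := Int.eq_ofNat_of_zero_le h0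
    cases a with
    | zero =>
      simp only [Nat.cast_zero, zero_sub]
      rw [chI_neg N (show (-1:ℤ) < 0 by norm_num)]
      rw [show (0:ℤ) = ((0:ℕ):ℤ) by norm_num, chI_natCast, chI_natCast]
      simp
    | succ b =>
      have hb1 : ((b+1 : ℕ) : ℤ) - 1 = ((b : ℕ) : ℤ) := by push_cast; ring
      rw [hb1, chI_natCast, chI_natCast, chI_natCast]
      by_cases hb : b + 1 ≤ N + 1
      · rw [if_pos hb]
        by_cases hb2 : b + 1 ≤ N
        · rw [if_pos (by omega), if_pos hb2, Nat.choose_succ_succ]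
          push_cast; ring
        · have hbN : b = N := by omega
          subst hbN
          rw [if_pos (le_refl _), if_neg (by omega)]
          simp [Nat.choose_self, Nat.choose_succ_self]
      · rw [if_neg hb, if_neg (by omega), if_neg (by omega)]; ring

theorem chI_symm (N : ℕ) (j : ℤ) : chI N j = chI N (N - j) := by
  rcases lt_or_ge j 0 with h | h
  · rw [chI_neg _ h, chI, if_neg (by omega)]
  · obtain ⟨a, rfl⟩ := Int.eq_ofNat_of_zero_le h
    by_cases ha : a ≤ N
    · have : ((N:ℤ) - a) = ((N - a : ℕ) : ℤ) := by omega
      rw [this, chI_natCast, chI_natCast, if_pos ha, if_pos (by omega),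
        Nat.choose_symm ha]
    · rw [chI_natCast, if_neg ha, chI, if_neg (by omega)]

theorem bb_rec (p : ℕ) (k : ℤ) : bb (p+1) k = bb p (k-1) + 2 * bb p k + bb p (k+1) := by
  have e : ∀ j : ℤ, chI (2*(p+1)) j = chI (2*p) (j-2) + 2*chI (2*p) (j-1) + chI (2*p) j := by
    intro j
    have h1 : 2*(p+1) = (2*p+1)+1 := by ring
    rw [h1, chI_pascal, chI_pascal, chI_pascal]
    have h2 : j - 1 - 1 = j - 2 := by ring
    rw [h2]; ring
  show chI (2*(p+1)) (((p+1 : ℕ) : ℤ) - k) - chI (2*(p+1)) (((p+1:ℕ):ℤ) - k - 1) = _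
  rw [e, e]
  have c1 : ((p+1:ℕ):ℤ) - k - 2 = (p:ℤ) - k - 1 := by push_cast; ring
  have c2 : ((p+1:ℕ):ℤ) - k - 1 = (p:ℤ) - k := by push_cast; ring
  have c3 : ((p+1:ℕ):ℤ) - k = (p:ℤ) - k + 1 := by push_cast; ring
  have c4 : ((p+1:ℕ):ℤ) - k - 1 - 2 = (p:ℤ) - k - 2 := by push_cast; ring
  have c5 : ((p+1:ℕ):ℤ) - k - 1 - 1 = (p:ℤ) - k - 1 := by push_cast; ring
  rw [c4, c5, c1, c2, c3]
  show _ = (chI (2*p) ((p:ℤ) - (k-1)) - chI (2*p) ((p:ℤ) - (k-1) - 1))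
      + 2 * (chI (2*p) ((p:ℤ) - k) - chI (2*p) ((p:ℤ) - k - 1))
      + (chI (2*p) ((p:ℤ) - (k+1)) - chI (2*p) ((p:ℤ) - (k+1) - 1))
  have d1 : (p:ℤ) - (k-1) = (p:ℤ) - k + 1 := by ring
  have d2 : (p:ℤ) - (k-1) - 1 = (p:ℤ) - k := by ring
  have d3 : (p:ℤ) - (k+1) = (p:ℤ) - k - 1 := by ring
  have d4 : (p:ℤ) - (k+1) - 1 = (p:ℤ) - k - 2 := by ring
  rw [d2, d1, d4, d3]
  ring

theorem bb_zero_of_lt (p : ℕ) (k : ℤ) (h : (p:ℤ) < k) : bb p k = 0 := by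
  rw [bb, chI_neg _ (by omega), chI_neg _ (by omega), sub_zero]

theorem bb_diag (p : ℕ) : bb p ((p:ℕ) : ℤ) = 1 := by
  unfold bb
  rw [show ((p:ℤ) - (p:ℤ)) = ((0:ℕ):ℤ) by push_cast; ring]
  rw [chI_natCast, chI_neg _ (by norm_num)]
  simp

theorem bb_neg_one (p : ℕ) : bb p (-1) = - bb p 0 := by
  rw [bb, bb]
  have e1 : (p:ℤ) - (-1) = (p:ℤ) + 1 := by ring
  have e2 : (p:ℤ) - (-1) - 1 = (p:ℤ) := by ring
  have e3 : (p:ℤ) - 0 = (p:ℤ) := by ring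
  have e4 : (p:ℤ) - 0 - 1 = (p:ℤ) - 1 := by ring
  rw [e2, e1, e4, e3]
  have : chI (2*p) ((p:ℤ)+1) = chI (2*p) ((p:ℤ)-1) := by
    rw [chI_symm (2*p) ((p:ℤ)+1)]
    congr 1
    push_cast; ring
  rw [this]; ring

theorem bb_zero_left (k : ℤ) (h : 0 ≤ k) : bb 0 k = if k = 0 then 1 else 0 := by
  rcases eq_or_lt_of_le h with h' | h'
  · rw [← h']
    simp only [bb]
    norm_num [chI, Nat.choose]
  · rw [bb_zero_of_lt 0 k (by omega), if_neg (by omega)]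

theorem bb_cat (p : ℕ) : bb p 0 = (catalan p : ℚ) := by
  rw [bb]
  have e4 : (p:ℤ) - 0 - 1 = ((p:ℕ):ℤ) - 1 := by ring
  have e3 : (p:ℤ) - 0 = ((p:ℕ):ℤ) := by ring
  rw [e4, e3]
  rcases Nat.eq_zero_or_pos p with rfl | hp
  · norm_num [chI, catalan]
  · have h1 : chI (2*p) (p:ℤ) = ((2*p).choose p : ℚ) := by
      rw [chI_natCast, if_pos (by omega)]
    have h2 : ((p:ℕ):ℤ) - 1 = ((p - 1 : ℕ) : ℤ) := by omega
    have h3 : chI (2*p) (((p:ℕ):ℤ) - 1) = ((2*p).choose (p-1) : ℚ) := by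
      rw [h2, chI_natCast, if_pos (by omega)]
    rw [h1, h3]
    have hkey : (2*p).choose p * p = (2*p).choose (p-1) * (p+1) := by
      have h5 := Nat.choose_succ_right_eq (2*p) (p-1)
      have hp1 : p - 1 + 1 = p := by omega
      rw [hp1] at h5
      have h2p : 2*p - (p-1) = p + 1 := by omega
      rw [h2p] at h5
      omega
    have hkeyQ : ((2*p).choose p : ℚ) * p = ((2*p).choose (p-1) : ℚ) * ((p:ℚ)+1) := by
      have h7 := congrArg (Nat.cast (R := ℚ)) hkey
      push_cast at h7
      linarith [h7]
    have hcat : ((p:ℚ)+1) * (catalan p : ℚ) = ((2*p).choose p : ℚ) := by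
      have h6 := succ_mul_catalan_eq_centralBinom p
      rw [Nat.centralBinom] at h6
      have h8 := congrArg (Nat.cast (R := ℚ)) h6
      push_cast at h8
      linarith [h8]
    have hne : ((p:ℚ)+1) ≠ 0 := by positivity
    have hBC : ((2*p).choose (p-1) : ℚ) = (p:ℚ) * (catalan p : ℚ) := by
      apply mul_left_cancel₀ hne
      calc ((p:ℚ)+1) * ((2*p).choose (p-1) : ℚ) = ((2*p).choose p : ℚ) * p := by
            linarith [hkeyQ]
        _ = ((p:ℚ)+1) * ((p:ℚ) * (catalan p : ℚ)) := by rw [← hcat]; ring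
    linarith [hcat, hBC]

theorem sg_zero : sg 0 = 1 := by simp [sg]

theorem sg_one : sg 1 = -1 := by simp [sg]

theorem sg_add (a b : ℤ) : sg (a+b) = sg a * sg b := by
  unfold sg
  by_cases ha : Even a <;> by_cases hb : Even b <;>
    simp [ha, hb, Int.even_add] <;> norm_num

theorem sg_succ (a : ℤ) : sg (a+1) = - sg a := by
  rw [sg_add, sg_one]; ring

theorem sg_add_two (a : ℤ) : sg (a+2) = sg a := by
  rw [show a+2 = (a+1)+1 by ring, sg_succ, sg_succ]; ring

theorem sg_sub_one (a : ℤ) : sg (a-1) = - sg a := by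
  rw [show a = (a-1)+1 by ring, sg_succ]; ring_nf

theorem sg_natCast (a : ℕ) : sg (a : ℤ) = (-1:ℚ)^a := by
  unfold sg
  rcases Nat.even_or_odd a with h | h
  · rw [if_pos (by exact_mod_cast h), h.neg_one_pow]
  · rw [if_neg (by rw [Int.even_coe_nat]; exact (Nat.not_even_iff_odd).mpr h), h.neg_one_pow]

theorem sg_mul_self (a : ℤ) : sg a * sg a = 1 := by
  unfold sg; split_ifs <;> norm_num

theorem ch2_natCast (a : ℕ) (r : ℕ) : ch2 (a:ℤ) r = (a.choose r : ℚ) := by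
  rw [ch2, if_pos (by positivity), Int.toNat_natCast]

theorem wu_neg_one (q : ℕ) : wu (-1) q = 0 := by
  unfold wu ch2
  rcases Nat.eq_zero_or_pos q with rfl | hq
  · rw [if_neg (by norm_num)]
  · rw [if_pos (by omega), Nat.choose_eq_zero_of_lt (by omega)]
    norm_num

theorem wu_zero (q : ℕ) : wu 0 q = if q = 0 then 1 else 0 := by
  unfold wu ch2
  rcases Nat.eq_zero_or_pos q with rfl | hq
  · norm_num
  · rw [if_pos (by positivity), Nat.choose_eq_zero_of_lt (by omega), if_neg (by omega)]
    norm_num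

theorem ws_neg_one (q : ℕ) : ws (-1) q = 0 := by
  unfold ws; rw [wu_neg_one]; ring

theorem ws_zero (q : ℕ) : ws 0 q = if q = 0 then 1 else 0 := by
  unfold ws
  rw [wu_zero]
  rcases Nat.eq_zero_or_pos q with rfl | hq
  · simp [sg_zero]
  · simp [if_neg (by omega : ¬ q = 0)]

theorem ws_k0 (k : ℤ) (h : 0 ≤ k) : ws k 0 = sg k := by
  unfold ws wu
  rw [show 2*0 = 0 from rfl, ch2, if_pos (by omega)]
  simp [Nat.choose_zero_right]

theorem choose_second_diff (a q : ℕ) :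
    (a+2).choose (2*q+2) + a.choose (2*q+2) = a.choose (2*q) + 2 * ((a+1).choose (2*q+2)) := by
  have h1 := Nat.choose_succ_succ (a+1) (2*q+1)
  have h2 := Nat.choose_succ_succ a (2*q)
  have h3 := Nat.choose_succ_succ a (2*q+1)
  simp only [Nat.succ_eq_add_one] at h1 h2 h3
  rw [show a+1+1 = a+2 from by omega, show 2*q+1+1 = 2*q+2 from by omega] at h1
  rw [show 2*q+1+1 = 2*q+2 from by omega] at h3
  omega

theorem ws_rec (q : ℕ) (k : ℤ) (hk : 0 ≤ k) :
    ws (k-1) (q+1) + 2 * ws k (q+1) + ws (k+1) (q+1) = ws k q := by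
  unfold ws wu
  rw [show k - 1 + ((q+1:ℕ):ℤ) = (k + q) by push_cast; ring]
  rw [show k + 1 + ((q+1:ℕ):ℤ) = (k + q) + 2 by push_cast; ring]
  rw [show k + ((q+1:ℕ):ℤ) = (k + q) + 1 by push_cast; ring]
  rw [sg_succ, sg_add_two]
  have hc : ch2 (k+q) (2*(q+1)) + ch2 ((k+q)+2) (2*(q+1))
      = ch2 (k+q) (2*q) + 2 * ch2 ((k+q)+1) (2*(q+1)) := by
    obtain ⟨a, ha⟩ := Int.eq_ofNat_of_zero_le (show (0:ℤ) ≤ k + q by omega)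
    rw [ha, show ((a:ℕ):ℤ)+1 = ((a+1:ℕ):ℤ) by push_cast; ring,
      show ((a:ℕ):ℤ)+2 = ((a+2:ℕ):ℤ) by push_cast; ring,
      ch2_natCast, ch2_natCast, ch2_natCast, ch2_natCast,
      show 2*(q+1) = 2*q+2 from by ring]
    have h9 := choose_second_diff a q
    exact_mod_cast (by omega :
      a.choose (2*q+2) + (a+2).choose (2*q+2) = a.choose (2*q) + 2 * ((a+1).choose (2*q+2)))
  linear_combination (sg (k+q)) * hc

theorem pad_bb_left (p : ℕ) (f : ℕ → ℚ) {L L' : ℕ} (h : p + 1 ≤ L) (h' : L ≤ L') :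
    ∑ k ∈ range L', bb p (k:ℤ) * f k = ∑ k ∈ range L, bb p (k:ℤ) * f k := by
  refine (Finset.sum_subset (Finset.range_subset_range.mpr h') ?_).symm
  intro x hx hnx
  rw [bb_zero_of_lt p x (by
    simp only [Finset.mem_range] at hx hnx
    omega), zero_mul]

theorem pad_bb_right (q : ℕ) (f : ℕ → ℚ) {L L' : ℕ} (h : q + 1 ≤ L) (h' : L ≤ L') :
    ∑ k ∈ range L', f k * bb q (k:ℤ) = ∑ k ∈ range L, f k * bb q (k:ℤ) := by
  refine (Finset.sum_subset (Finset.range_subset_range.mpr h') ?_).symm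
  intro x hx hnx
  rw [bb_zero_of_lt q x (by
    simp only [Finset.mem_range] at hx hnx
    omega), mul_zero]

theorem SL1 (p : ℕ) (g : ℤ → ℚ) (L : ℕ) (hL : p + 2 ≤ L) :
    ∑ k ∈ range L, bb p ((k:ℤ)-1) * g k = (∑ k ∈ range L, bb p k * g ((k:ℤ)+1)) - bb p 0 * g 0 := by
  obtain ⟨L', rfl⟩ : ∃ L'', L = L'' + 1 := ⟨L - 1, by omega⟩
  rw [Finset.sum_range_succ' (fun k => bb p ((k:ℤ)-1) * g k) L']
  have e1 : ∀ k ∈ range L', bb p (((k+1:ℕ):ℤ)-1) * g ((k+1:ℕ):ℤ) = bb p (k:ℤ) * g ((k:ℤ)+1) := by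
    intro k _
    rw [show ((k+1:ℕ):ℤ)-1 = (k:ℤ) by push_cast; ring, show ((k+1:ℕ):ℤ) = (k:ℤ)+1 by push_cast; ring]
  rw [Finset.sum_congr rfl e1]
  rw [Finset.sum_range_succ (fun k => bb p (k:ℤ) * g ((k:ℤ)+1)) L']
  rw [bb_zero_of_lt p (L':ℤ) (by omega), zero_mul, add_zero]
  simp only [Nat.cast_zero, zero_sub]
  rw [show ((-1:ℤ)) = (-1:ℤ) from rfl, bb_neg_one]
  ring

theorem SL2 (p : ℕ) (g : ℤ → ℚ) (L : ℕ) (hL : p + 1 ≤ L) :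
    ∑ k ∈ range L, bb p ((k:ℤ)+1) * g k = (∑ k ∈ range L, bb p k * g ((k:ℤ)-1)) - bb p 0 * g (-1) := by
  have h := Finset.sum_range_succ' (fun j => bb p (j:ℤ) * g ((j:ℤ)-1)) L
  have e1 : ∀ j ∈ range L, bb p ((j+1:ℕ):ℤ) * g (((j+1:ℕ):ℤ)-1) = bb p ((j:ℤ)+1) * g (j:ℤ) := by
    intro j _
    rw [show ((j+1:ℕ):ℤ) = (j:ℤ)+1 by push_cast; ring]
    ring_nf
  rw [Finset.sum_congr rfl e1] at h
  rw [Finset.sum_range_succ (fun j => bb p (j:ℤ) * g ((j:ℤ)-1)) L] at h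
  rw [bb_zero_of_lt p (L:ℤ) (by omega), zero_mul, add_zero] at h
  simp only [Nat.cast_zero, zero_sub] at h
  -- h : ∑ j in range L, bb p ↑j * g (↑j−1) = (∑ k in range L, bb p (↑k+1) * g ↑k) + bb p 0 * g (−1)
  linarith [h]

theorem shuffle (p : ℕ) (g : ℤ → ℚ) (L : ℕ) (hL : p + 2 ≤ L) :
    ∑ k ∈ range L, bb (p+1) (k:ℤ) * g k
      = (∑ k ∈ range L, bb p k * (g ((k:ℤ)-1) + 2 * g k + g ((k:ℤ)+1)))
        - bb p 0 * g (-1) - bb p 0 * g 0 := by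
  have h0 : ∀ k ∈ range L, bb (p+1) (k:ℤ) * g k
      = bb p ((k:ℤ)-1) * g k + 2 * (bb p (k:ℤ) * g k) + bb p ((k:ℤ)+1) * g k := by
    intro k _; rw [bb_rec]; ring
  rw [Finset.sum_congr rfl h0, Finset.sum_add_distrib, Finset.sum_add_distrib]
  rw [SL1 p g L hL, SL2 p g L (by omega)]
  have h1 : ∀ k ∈ range L, bb p (k:ℤ) * (g ((k:ℤ)-1) + 2 * g k + g ((k:ℤ)+1))
      = bb p (k:ℤ) * g ((k:ℤ)+1) + 2 * (bb p (k:ℤ) * g (k:ℤ)) + bb p (k:ℤ) * g ((k:ℤ)-1) := by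
    intro k _; ring
  rw [Finset.sum_congr rfl h1, Finset.sum_add_distrib, Finset.sum_add_distrib]
  have h2 : ∑ k ∈ range L, 2 * (bb p (k:ℤ) * g (k:ℤ)) = 2 * ∑ k ∈ range L, bb p (k:ℤ) * g (k:ℤ) := by
    rw [Finset.mul_sum]
  rw [h2]
  ring

theorem I2 (p q : ℕ) :
    ∑ k ∈ range (p+q+3), bb p (k:ℤ) * bb q (k:ℤ) = (catalan (p+q) : ℚ) := by
  induction p generalizing q with
  | zero =>
    rw [Finset.sum_eq_single 0 ?h0 ?h1]
    · have hd : bb 0 ((0:ℕ):ℤ) = 1 := bb_diag 0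
      rw [Nat.cast_zero] at hd
      rw [Nat.cast_zero, hd, one_mul, bb_cat, zero_add]
    case h0 =>
      intro k _ hk0
      rw [bb_zero_of_lt 0 (k:ℤ) (by exact_mod_cast Nat.pos_of_ne_zero hk0), zero_mul]
    case h1 =>
      intro h; exact absurd (Finset.mem_range.mpr (by omega)) h
  | succ p ih =>
    rw [shuffle p (bb q) (p+1+q+3) (by omega)]
    have e : ∀ k ∈ range (p+1+q+3), bb p (k:ℤ) * (bb q ((k:ℤ)-1) + 2 * bb q (k:ℤ) + bb q ((k:ℤ)+1))
        = bb p (k:ℤ) * bb (q+1) (k:ℤ) := by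
      intro k _; rw [← bb_rec]
    rw [Finset.sum_congr rfl e, bb_neg_one]
    rw [show p+1+q+3 = p+(q+1)+3 from by omega, ih (q+1)]
    rw [show p+(q+1) = p+1+q from by omega]
    ring

theorem I1 (p q : ℕ) :
    ∑ k ∈ range (p+q+3), bb p (k:ℤ) * ws (k:ℤ) q = (if p = q then (1:ℚ) else 0) := by
  induction p generalizing q with
  | zero =>
    rw [Finset.sum_eq_single 0 ?h0 ?h1]
    · have hd : bb 0 ((0:ℕ):ℤ) = 1 := bb_diag 0
      rw [Nat.cast_zero] at hd
      rw [Nat.cast_zero, hd, one_mul, ws_zero]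
      by_cases h : q = 0 <;> simp [h, eq_comm]
    case h0 =>
      intro k _ hk0
      rw [bb_zero_of_lt 0 (k:ℤ) (by exact_mod_cast Nat.pos_of_ne_zero hk0), zero_mul]
    case h1 =>
      intro h; exact absurd (Finset.mem_range.mpr (by omega)) h
  | succ p ih =>
    rw [shuffle p (fun z => ws z q) (p+1+q+3) (by omega)]
    cases q with
    | zero =>
      have e : ∀ k ∈ range (p+1+0+3),
          bb p (k:ℤ) * (ws ((k:ℤ)-1) 0 + 2 * ws (k:ℤ) 0 + ws ((k:ℤ)+1) 0)
          = if k = 0 then bb p 0 else 0 := by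
        intro k _
        cases k with
        | zero =>
          simp only [Nat.cast_zero, zero_sub, zero_add]
          rw [ws_neg_one, ws_k0 0 (by norm_num), ws_k0 1 (by norm_num), sg_zero, sg_one]
          norm_num
        | succ k' =>
          rw [show ((k'+1:ℕ):ℤ)-1 = (k':ℤ) by push_cast; ring,
            show ((k'+1:ℕ):ℤ)+1 = (k':ℤ)+2 by push_cast; ring,
            show ((k'+1:ℕ):ℤ) = (k':ℤ)+1 by push_cast; ring]
          rw [ws_k0 _ (by positivity), ws_k0 _ (by positivity), ws_k0 _ (by positivity)]
          rw [sg_succ, sg_add_two, if_neg (by omega)]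
          ring
      rw [Finset.sum_congr rfl e, Finset.sum_ite_eq' (range (p+1+0+3)) 0 (fun _ => bb p 0)]
      rw [if_pos (Finset.mem_range.mpr (by omega)), ws_neg_one, ws_k0 0 (by norm_num), sg_zero]
      rw [if_neg (by omega)]
      ring
    | succ q' =>
      have e : ∀ k ∈ range (p+1+(q'+1)+3),
          bb p (k:ℤ) * (ws ((k:ℤ)-1) (q'+1) + 2 * ws (k:ℤ) (q'+1) + ws ((k:ℤ)+1) (q'+1))
          = bb p (k:ℤ) * ws (k:ℤ) q' := by
        intro k _; rw [ws_rec q' (k:ℤ) (by positivity)]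
      rw [Finset.sum_congr rfl e]
      rw [ws_neg_one, ws_zero, if_neg (by omega)]
      rw [pad_bb_left p (fun k => ws (k:ℤ) q') (show p+1 ≤ p+q'+3 by omega)
        (show p+q'+3 ≤ p+1+(q'+1)+3 by omega)]
      rw [← pad_bb_left p (fun k => ws (k:ℤ) q') (show p+1 ≤ p+q'+3 by omega)
        (show p+q'+3 ≤ p+q'+3 from le_refl _), ih q']
      by_cases h : p = q' <;> simp [h]

theorem I2' (p q L : ℕ) (hL : q + 1 ≤ L) :
    ∑ k ∈ range L, bb p (k:ℤ) * bb q (k:ℤ) = (catalan (p+q) : ℚ) := by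
  rw [pad_bb_right q (fun k => bb p (k:ℤ)) (le_refl (q+1)) hL,
    ← pad_bb_right q (fun k => bb p (k:ℤ)) (le_refl (q+1)) (show q+1 ≤ p+q+3 by omega),
    I2]

theorem I1' (p q L : ℕ) (hL : p + 1 ≤ L) :
    ∑ k ∈ range L, bb p (k:ℤ) * ws (k:ℤ) q = (if p = q then (1:ℚ) else 0) := by
  rw [pad_bb_left p (fun k => ws (k:ℤ) q) (le_refl (p+1)) hL,
    ← pad_bb_left p (fun k => ws (k:ℤ) q) (le_refl (p+1)) (show p+1 ≤ p+q+3 by omega),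
    I1]

theorem sg_two_mul (a : ℤ) : sg (2*a) = 1 := by
  unfold sg; rw [if_pos ⟨a, by ring⟩]

theorem I1s (p q L : ℕ) (hL : p + 1 ≤ L) :
    ∑ k ∈ range L, (sg (((p:ℕ):ℤ) + ((k:ℕ):ℤ)) * bb p (k:ℤ)) * wu (k:ℤ) q
      = (if p = q then (1:ℚ) else 0) := by
  have e : ∀ k ∈ range L, (sg (((p:ℕ):ℤ)+((k:ℕ):ℤ)) * bb p (k:ℤ)) * wu (k:ℤ) q
      = sg (((p:ℕ):ℤ)+((q:ℕ):ℤ)) * (bb p (k:ℤ) * ws (k:ℤ) q) := by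
    intro k _
    unfold ws
    have h1 : sg (((p:ℕ):ℤ)+((k:ℕ):ℤ)) = sg (((p:ℕ):ℤ)+((q:ℕ):ℤ)) * sg (((k:ℕ):ℤ)+((q:ℕ):ℤ)) := by
      rw [← sg_add, show ((p:ℕ):ℤ)+((q:ℕ):ℤ)+(((k:ℕ):ℤ)+((q:ℕ):ℤ)) = (((p:ℕ):ℤ)+((k:ℕ):ℤ)) + 2*((q:ℕ):ℤ) by ring,
        sg_add (((p:ℕ):ℤ)+((k:ℕ):ℤ)) (2*((q:ℕ):ℤ)), sg_two_mul, mul_one]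
    rw [h1]; ring
  rw [Finset.sum_congr rfl e, ← Finset.mul_sum, I1' p q L hL]
  by_cases h : p = q
  · subst h
    rw [if_pos rfl, mul_one, show ((p:ℕ):ℤ)+((p:ℕ):ℤ) = 2*((p:ℕ):ℤ) by ring, sg_two_mul]
  · rw [if_neg h, mul_zero]

theorem rot_pow_val (K : ℕ) (c : ℕ) (x : Fin (K+1)) :
    (((finRotate (K+1))^c) x).val = (x.val + c) % (K+1) := by
  induction c generalizing x with
  | zero => simp [Nat.mod_eq_of_lt x.isLt]
  | succ c ih =>
    rw [pow_succ, Equiv.Perm.mul_apply, finRotate_succ_apply, ih (x+1)]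
    have h1 : (x+1).val = (x.val + 1) % (K+1) := by
      rw [Fin.val_add, Fin.val_one', Nat.add_mod_mod]
    rw [h1, Nat.mod_add_mod]
    congr 1
    omega

theorem sign_addRot (Nn : ℕ) (hNn : 0 < Nn) (c : ℕ) (f : Equiv.Perm (Fin Nn))
    (hf : ∀ x, (f x).val = (x.val + c) % Nn) :
    Equiv.Perm.sign f = ((-1:ℤˣ)^(Nn-1))^c := by
  obtain ⟨K, rfl⟩ : ∃ K, Nn = K + 1 := ⟨Nn - 1, by omega⟩
  have hfe : f = (finRotate (K+1))^c := by
    apply Equiv.ext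
    intro x
    apply Fin.ext
    rw [hf, rot_pow_val]
  rw [hfe, map_pow, sign_finRotate]

theorem neg_one_pow_mod2 (a b : ℕ) (h : a % 2 = b % 2) : ((-1:ℚ))^a = (-1)^b := by
  rcases Nat.even_or_odd a with ha | ha
  · rw [ha.neg_one_pow, (Nat.even_iff.mpr (by rw [← h]; exact Nat.even_iff.mp ha)).neg_one_pow]
  · rw [ha.neg_one_pow, (Nat.odd_iff.mpr (by rw [← h]; exact Nat.odd_iff.mp ha)).neg_one_pow]

section MatrixPart

def Ahat (m n : ℕ) : Matrix (Fin (n+m)) (Fin (n+m)) ℚ :=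
  Matrix.of fun p k => sg (((p:ℕ):ℤ) + ((k:ℕ):ℤ)) * bb (p:ℕ) ((k:ℕ):ℤ)

def What (m n : ℕ) : Matrix (Fin (n+m)) (Fin (n+m)) ℚ :=
  Matrix.of fun k q => wu ((k:ℕ):ℤ) ((q:ℕ))

def rhoe (m n : ℕ) : (Fin n ⊕ Fin m) ≃ Fin (n+m) := finSumFinEquiv

def kape (m n : ℕ) : (Fin n ⊕ Fin m) ≃ Fin (n+m) :=
  (Equiv.sumComm (Fin n) (Fin m)).trans (finSumFinEquiv.trans (finCongr (Nat.add_comm m n)))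

theorem rhoe_l (m n : ℕ) (i : Fin n) : ((rhoe m n (Sum.inl i) : Fin (n+m)) : ℕ) = (i:ℕ) := by
  simp [rhoe]

theorem rhoe_r (m n : ℕ) (i : Fin m) : ((rhoe m n (Sum.inr i) : Fin (n+m)) : ℕ) = n + (i:ℕ) := by
  simp [rhoe]

theorem kape_l (m n : ℕ) (i : Fin n) : ((kape m n (Sum.inl i) : Fin (n+m)) : ℕ) = m + (i:ℕ) := by
  simp [kape]
  omega

theorem kape_r (m n : ℕ) (k : Fin m) : ((kape m n (Sum.inr k) : Fin (n+m)) : ℕ) = (k:ℕ) := by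
  simp [kape]

theorem AW_eq_one (m n : ℕ) : Ahat m n * What m n = 1 := by
  ext p q
  rw [Matrix.mul_apply]
  simp only [Ahat, What, Matrix.of_apply]
  rw [Fin.sum_univ_eq_sum_range
    (fun k => (sg (((p:ℕ):ℤ) + ((k:ℕ):ℤ)) * bb (p:ℕ) ((k:ℕ):ℤ)) * wu ((k:ℕ):ℤ) ((q:ℕ))) (n+m)]
  rw [I1s (p:ℕ) (q:ℕ) (n+m) (by omega)]
  rw [Matrix.one_apply]
  by_cases h : p = q
  · rw [if_pos h, if_pos (by rw [h])]
  · rw [if_neg h, if_neg (fun hc => h (Fin.ext hc))]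

def Zp (m n : ℕ) : Matrix (Fin n ⊕ Fin m) (Fin n ⊕ Fin m) ℚ :=
  (Ahat m n).submatrix (rhoe m n) (kape m n)

def Wp (m n : ℕ) : Matrix (Fin n ⊕ Fin m) (Fin n ⊕ Fin m) ℚ :=
  (What m n).submatrix (kape m n) (rhoe m n)

theorem ZW_eq_one (m n : ℕ) : Zp m n * Wp m n = 1 := by
  rw [Zp, Wp, Matrix.submatrix_mul_equiv, AW_eq_one, Matrix.submatrix_one_equiv]

def C3 (m n : ℕ) : Matrix (Fin n) (Fin n) ℚ :=
  Matrix.of fun i j => wu (((m + (i:ℕ) : ℕ)):ℤ) ((j:ℕ))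

def Yv (m n : ℕ) : Matrix (Fin m) (Fin n) ℚ :=
  Matrix.of fun i j => wu (((i:ℕ):ℤ)) ((j:ℕ))

def Gm (m n : ℕ) : Matrix (Fin m) (Fin m) ℚ :=
  Matrix.of fun i k => bb (n + (i:ℕ)) ((k:ℕ):ℤ)

def Gt (m n : ℕ) : Matrix (Fin m) (Fin m) ℚ :=
  Matrix.of fun i k => sg (((n + (i:ℕ) : ℕ):ℤ) + ((k:ℕ):ℤ)) * bb (n + (i:ℕ)) ((k:ℕ):ℤ)

def Xm (m n : ℕ) : Matrix (Fin n) (Fin m) ℚ :=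
  Matrix.of fun j k => Zp m n (Sum.inl j) (Sum.inr k)

def Um (m n : ℕ) : Matrix (Fin n ⊕ Fin m) (Fin n ⊕ Fin m) ℚ :=
  Matrix.fromBlocks (C3 m n) 0 (Yv m n) 1

theorem Wp_ll (m n : ℕ) (i j : Fin n) : Wp m n (Sum.inl i) (Sum.inl j) = C3 m n i j := by
  rw [Wp, Matrix.submatrix_apply, What, C3]
  simp only [Matrix.of_apply]
  rw [kape_l, rhoe_l]

theorem Wp_rl (m n : ℕ) (i : Fin m) (j : Fin n) : Wp m n (Sum.inr i) (Sum.inl j) = Yv m n i j := by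
  rw [Wp, Matrix.submatrix_apply, What, Yv]
  simp only [Matrix.of_apply]
  rw [kape_r, rhoe_l]

theorem Zp_rr (m n : ℕ) (i k : Fin m) : Zp m n (Sum.inr i) (Sum.inr k) = Gt m n i k := by
  rw [Zp, Matrix.submatrix_apply, Ahat, Gt]
  simp only [Matrix.of_apply]
  rw [rhoe_r, kape_r]

theorem ZU_eq (m n : ℕ) : Zp m n * Um m n = Matrix.fromBlocks 1 (Xm m n) 0 (Gt m n) := by
  ext p c
  cases c with
  | inl j =>
    have h1 : (Zp m n * Um m n) p (Sum.inl j) = (Zp m n * Wp m n) p (Sum.inl j) := by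
      rw [Matrix.mul_apply, Matrix.mul_apply]
      apply Finset.sum_congr rfl
      intro c _
      congr 1
      cases c with
      | inl i => rw [Wp_ll]; rfl
      | inr i => rw [Wp_rl]; rfl
    rw [h1, ZW_eq_one]
    cases p with
    | inl i =>
      rw [Matrix.fromBlocks_apply₁₁]
      rw [Matrix.one_apply, Matrix.one_apply]
      by_cases h : i = j
      · rw [if_pos h, if_pos (by rw [h])]
      · rw [if_neg h, if_neg (fun hc => h (Sum.inl.inj hc))]
    | inr i =>
      rw [Matrix.fromBlocks_apply₂₁, Matrix.one_apply, if_neg (by simp)]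
      rfl
  | inr k =>
    rw [Matrix.mul_apply, Fintype.sum_sum_type]
    have hz : ∀ i : Fin n, Zp m n p (Sum.inl i) * Um m n (Sum.inl i) (Sum.inr k) = 0 := by
      intro i
      rw [Um, Matrix.fromBlocks_apply₁₂]
      simp
    rw [Finset.sum_congr rfl (fun i _ => hz i), Finset.sum_const_zero, zero_add]
    have hu : ∀ i' : Fin m, Zp m n p (Sum.inr i') * Um m n (Sum.inr i') (Sum.inr k)
        = if i' = k then Zp m n p (Sum.inr i') else 0 := by
      intro i'
      rw [Um, Matrix.fromBlocks_apply₂₂, Matrix.one_apply]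
      by_cases h : i' = k
      · rw [if_pos h, if_pos h, mul_one]
      · rw [if_neg h, if_neg h, mul_zero]
    rw [Finset.sum_congr rfl (fun i' _ => hu i'), Finset.sum_ite_eq' Finset.univ k
      (fun i' => Zp m n p (Sum.inr i')), if_pos (Finset.mem_univ k)]
    cases p with
    | inl j => rw [Matrix.fromBlocks_apply₁₂]; rfl
    | inr i => rw [Matrix.fromBlocks_apply₂₂, Zp_rr]

theorem Ahat_lowerTri (m n : ℕ) : (Ahat m n).BlockTriangular OrderDual.toDual := by
  intro i j hij
  have h2 : (i:ℕ) < (j:ℕ) := hij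
  simp only [Ahat, Matrix.of_apply]
  rw [bb_zero_of_lt _ _ (by exact_mod_cast h2), mul_zero]

theorem Ahat_det (m n : ℕ) : (Ahat m n).det = 1 := by
  rw [Matrix.det_of_lowerTriangular (Ahat m n) (Ahat_lowerTri m n)]
  apply Finset.prod_eq_one
  intro p _
  simp only [Ahat, Matrix.of_apply]
  rw [show ((p:ℕ):ℤ) + ((p:ℕ):ℤ) = 2*((p:ℕ):ℤ) by ring, sg_two_mul, one_mul, bb_diag]

theorem parity_key (m n : ℕ) : ((-1:ℚ))^((n+m-1)*m) = (-1:ℚ)^(m*n) := by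
  rcases Nat.even_or_odd m with h2 | h2
  · rw [(h2.mul_left (n+m-1)).neg_one_pow, (h2.mul_right n).neg_one_pow]
  · rcases Nat.even_or_odd n with h3 | h3
    · have h4 : Even (n+m-1) := by
        rw [Nat.even_iff] at h3 ⊢
        rw [Nat.odd_iff] at h2
        omega
      rw [(h4.mul_right m).neg_one_pow, (h3.mul_left m).neg_one_pow]
    · have h4 : Odd (n+m-1) := by
        rw [Nat.odd_iff] at h2 h3 ⊢
        omega
      rw [(h4.mul h2).neg_one_pow, (h2.mul h3).neg_one_pow]

theorem Zp_det (m n : ℕ) (hm : 1 ≤ m) (hn : 1 ≤ n) : (Zp m n).det = (-1:ℚ)^(m*n) := by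
  have hσ : Zp m n = ((Ahat m n).submatrix (rhoe m n) (rhoe m n)).submatrix id
      ((kape m n).trans (rhoe m n).symm) := by
    ext p c
    simp only [Zp, Matrix.submatrix_apply, id_eq, Equiv.trans_apply, Equiv.apply_symm_apply]
  rw [hσ, Matrix.det_permute', Matrix.det_submatrix_equiv_self, Ahat_det, mul_one]
  set σ := (kape m n).trans (rhoe m n).symm with hσdef
  have hs1 : Equiv.Perm.sign σ = Equiv.Perm.sign ((rhoe m n).permCongr σ) :=
    (Equiv.Perm.sign_permCongr (rhoe m n) σ).symm
  have hperm : ∀ x : Fin (n+m), ((((rhoe m n).permCongr σ)) x).val = (x.val + m) % (n+m) := by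
    intro x
    rw [Equiv.permCongr_apply]
    simp only [hσdef, Equiv.trans_apply, Equiv.apply_symm_apply]
    rcases h : (rhoe m n).symm x with i | i
    · have hx : x = rhoe m n (Sum.inl i) := by rw [← h, Equiv.apply_symm_apply]
      rw [kape_l]
      have hxv : (x:ℕ) = (i:ℕ) := by rw [hx, rhoe_l]
      rw [hxv, Nat.mod_eq_of_lt (by omega)]
      omega
    · have hx : x = rhoe m n (Sum.inr i) := by rw [← h, Equiv.apply_symm_apply]
      rw [kape_r]
      have hxv : (x:ℕ) = n + (i:ℕ) := by rw [hx, rhoe_r]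
      rw [hxv, show n + (i:ℕ) + m = (n+m) + (i:ℕ) by omega, Nat.add_mod_left]
      exact (Nat.mod_eq_of_lt (by omega)).symm
  have hs2 := sign_addRot (n+m) (by omega) m ((rhoe m n).permCongr σ) hperm
  rw [hs1, hs2]
  have hcast : ((((-1:ℤˣ)^(n+m-1))^m : ℤˣ) : ℤ) = (-1:ℤ)^((n+m-1)*m) := by
    rw [← pow_mul]
    simp
  rw [hcast]
  push_cast
  exact parity_key m n

theorem Gt_det (m n : ℕ) : (Gt m n).det = (-1:ℚ)^(m*n) * (Gm m n).det := by
  have h1 : Gt m n = Matrix.of (fun i k : Fin m =>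
      sg (((n + (i:ℕ) : ℕ)):ℤ) * ((Matrix.of (fun i' k' : Fin m =>
        sg ((k':ℕ):ℤ) * Gm m n i' k')) i k)) := by
    ext i k
    simp only [Gt, Gm, Matrix.of_apply]
    rw [sg_add, mul_assoc]
  rw [h1, Matrix.det_mul_column, Matrix.det_mul_row, ← mul_assoc]
  congr 1
  rw [← Finset.prod_mul_distrib]
  have e : ∀ i : Fin m, sg (((n + (i:ℕ) : ℕ)):ℤ) * sg ((i:ℕ):ℤ) = (-1:ℚ)^n := by
    intro i
    rw [← sg_add, show (((n + (i:ℕ) : ℕ)):ℤ) + ((i:ℕ):ℤ) = ((n:ℕ):ℤ) + 2*((i:ℕ):ℤ) by push_cast; ring,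
      sg_add, sg_two_mul, mul_one, sg_natCast]
  rw [Finset.prod_congr rfl (fun i _ => e i), Finset.prod_const, Finset.card_univ,
    Fintype.card_fin, ← pow_mul, Nat.mul_comm]

def Tm (m : ℕ) : Matrix (Fin m) (Fin m) ℚ := Matrix.of fun j k => bb (j:ℕ) ((k:ℕ):ℤ)

theorem Tm_det (m : ℕ) : (Tm m).det = 1 := by
  have htri : (Tm m).BlockTriangular OrderDual.toDual := by
    intro i j hij
    have h2 : (i:ℕ) < (j:ℕ) := hij
    simp only [Tm, Matrix.of_apply]
    exact bb_zero_of_lt _ _ (by exact_mod_cast h2)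
  rw [Matrix.det_of_lowerTriangular (Tm m) htri]
  apply Finset.prod_eq_one
  intro j _
  simp only [Tm, Matrix.of_apply]
  exact bb_diag (j:ℕ)

theorem H1_eq (m n : ℕ) :
    (Matrix.of fun i j : Fin m => (catalan (n + (i:ℕ) + (j:ℕ)) : ℚ)) = Gm m n * (Tm m).transpose := by
  ext i j
  rw [Matrix.mul_apply]
  simp only [Gm, Tm, Matrix.transpose_apply, Matrix.of_apply]
  rw [Fin.sum_univ_eq_sum_range (fun k => bb (n + (i:ℕ)) ((k:ℕ):ℤ) * bb (j:ℕ) ((k:ℕ):ℤ)) m]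
  exact (I2' (n + (i:ℕ)) (j:ℕ) m (by omega)).symm

theorem H0_eq (m : ℕ) :
    (Matrix.of fun i j : Fin m => (catalan ((i:ℕ) + (j:ℕ)) : ℚ)) = Tm m * (Tm m).transpose := by
  ext i j
  rw [Matrix.mul_apply]
  simp only [Tm, Matrix.transpose_apply, Matrix.of_apply]
  rw [Fin.sum_univ_eq_sum_range (fun k => bb ((i:ℕ)) ((k:ℕ):ℤ) * bb (j:ℕ) ((k:ℕ):ℤ)) m]
  exact (I2' ((i:ℕ)) (j:ℕ) m (by omega)).symm

theorem main_det (m n : ℕ) (hm : 1 ≤ m) (hn : 1 ≤ n) : (C3 m n).det = (Gm m n).det := by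
  have h1 : (Zp m n).det * (Um m n).det = (Gt m n).det := by
    rw [← Matrix.det_mul, ZU_eq, Matrix.det_fromBlocks_zero₂₁, Matrix.det_one, one_mul]
  rw [Um, Matrix.det_fromBlocks_zero₁₂, Matrix.det_one, mul_one] at h1
  rw [Zp_det m n hm hn, Gt_det] at h1
  exact mul_left_cancel₀ (pow_ne_zero _ (by norm_num : (-1:ℚ) ≠ 0)) h1

end MatrixPart

end CatHankelAux

theorem binomial_det_eq_catalan_hankel_ratio (m n : ℕ) (hm : 1 ≤ m) (hn : 1 ≤ n) :
    Matrix.det (Matrix.of fun i j : Fin n =>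
        if (j : ℕ) ≤ (i : ℕ) + m then (((i : ℕ) + j + m).choose ((i : ℕ) + m - j) : ℚ)
        else 0) =
      Matrix.det (Matrix.of fun i j : Fin m => (catalan (n + i + j) : ℚ)) /
        Matrix.det (Matrix.of fun i j : Fin m => (catalan ((i : ℕ) + j) : ℚ)) := by
  have hLHS : (Matrix.of fun i j : Fin n =>
      if (j : ℕ) ≤ (i : ℕ) + m then (((i : ℕ) + j + m).choose ((i : ℕ) + m - j) : ℚ) else 0)
      = CatHankelAux.C3 m n := by
    ext i j
    simp only [Matrix.of_apply, CatHankelAux.C3, CatHankelAux.wu]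
    rw [show (((m + (i:ℕ) : ℕ)):ℤ) + ((j:ℕ):ℤ) = ((m + (i:ℕ) + (j:ℕ) : ℕ):ℤ) by push_cast; ring,
      CatHankelAux.ch2_natCast]
    rcases le_or_gt (j:ℕ) ((i:ℕ) + m) with h | h
    · rw [if_pos h]
      have h1 : 2*(j:ℕ) ≤ m + (i:ℕ) + (j:ℕ) := by omega
      have h2 := Nat.choose_symm h1
      rw [show m + (i:ℕ) + (j:ℕ) - 2*(j:ℕ) = (i:ℕ) + m - (j:ℕ) by omega] at h2
      rw [show (i:ℕ) + (j:ℕ) + m = m + (i:ℕ) + (j:ℕ) by omega, ← h2]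
    · rw [if_neg (by omega), Nat.choose_eq_zero_of_lt (by omega), Nat.cast_zero]
  rw [hLHS, CatHankelAux.H1_eq m n, CatHankelAux.H0_eq m, Matrix.det_mul, Matrix.det_mul,
    Matrix.det_transpose, CatHankelAux.Tm_det, mul_one, one_mul, div_one,
    CatHankelAux.main_det m n hm hn]
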